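/- The function f(m) := 2E(m)/(m·K(m)) + 1 − 2/m is strictly decreasing on (0,1), where K and E are the complete elliptic integrals of the first and second kind. -/

import Mathlib

open Real

noncomputable def ellK (m : ℝ) : ℝ :=
  ∫ θ in (0:ℝ)..(π / 2), 1 / Real.sqrt (1 - m * Real.sin θ ^ 2)

noncomputable def ellE (m : ℝ) : ℝ :=
  ∫ θ in (0:ℝ)..(π / 2), Real.sqrt (1 - m * Real.sin θ ^ 2)

open MeasureTheory intervalIntegral Set

/-- The weight function. -/
noncomputable def ellW (m θ : ℝ) : ℝ := 1 / Real.sqrt (1 - m * Real.sin θ ^ 2)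

/-- The auxiliary integral `J m = ∫ sin² θ · w m θ`. -/
noncomputable def ellJ (m : ℝ) : ℝ :=
  ∫ θ in (0:ℝ)..(π / 2), Real.sin θ ^ 2 * ellW m θ

lemma denom_pos {m : ℝ} (hm : m ∈ Set.Ioo (0:ℝ) 1) (θ : ℝ) :
    0 < 1 - m * Real.sin θ ^ 2 := by
  nlinarith [Real.sin_sq_le_one θ, hm.1, hm.2]

lemma ellW_pos {m : ℝ} (hm : m ∈ Set.Ioo (0:ℝ) 1) (θ : ℝ) : 0 < ellW m θ := by
  have := denom_pos hm θ
  unfold ellW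
  positivity

lemma continuous_ellW {m : ℝ} (hm : m ∈ Set.Ioo (0:ℝ) 1) :
    Continuous (ellW m) := by
  apply continuous_const.div
  · exact (Real.continuous_sqrt.comp (by continuity))
  · intro θ
    exact ne_of_gt (Real.sqrt_pos.2 (denom_pos hm θ))

lemma ellK_pos {m : ℝ} (hm : m ∈ Set.Ioo (0:ℝ) 1) : 0 < ellK m := by
  have h : ellK m = ∫ θ in (0:ℝ)..(π / 2), ellW m θ := rfl
  rw [h]
  apply intervalIntegral_pos_of_pos
  · exact (continuous_ellW hm).intervalIntegrable _ _
  · exact ellW_pos hm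
  · positivity

lemma ellE_eq {m : ℝ} (hm : m ∈ Set.Ioo (0:ℝ) 1) :
    ellE m = ellK m - m * ellJ m := by
  have hKW : ellK m = ∫ θ in (0:ℝ)..(π / 2), ellW m θ := rfl
  rw [hKW]
  unfold ellJ ellE
  rw [← intervalIntegral.integral_const_mul, ← intervalIntegral.integral_sub (g := fun x => m * (Real.sin x ^ 2 * ellW m x))
      ((continuous_ellW hm).intervalIntegrable _ _)
      ((continuous_const.mul (((continuous_sin.pow 2)).mul (continuous_ellW hm))).intervalIntegrable _ _)]
  apply intervalIntegral.integral_congr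
  intro θ _
  have h := denom_pos hm θ
  have hs : Real.sqrt (1 - m * Real.sin θ ^ 2) ≠ 0 := ne_of_gt (Real.sqrt_pos.2 h)
  unfold ellW
  rw [eq_comm]
  field_simp
  rw [Real.sq_sqrt h.le]

/-- Key pointwise strict inequality. -/
lemma key_strict {a b : ℝ} (ha : a ∈ Set.Ioo (0:ℝ) 1) (hb : b ∈ Set.Ioo (0:ℝ) 1)
    (hab : a < b) {θ φ : ℝ} (h : Real.sin φ ^ 2 < Real.sin θ ^ 2) :
    0 < (Real.sin θ ^ 2 - Real.sin φ ^ 2) *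
      (ellW b θ * ellW a φ - ellW a θ * ellW b φ) := by
  set u := Real.sin θ ^ 2 with hu
  set v := Real.sin φ ^ 2 with hv
  have hu1 : u ≤ 1 := Real.sin_sq_le_one θ
  have hv0 : 0 ≤ v := sq_nonneg _
  have h1 : 0 < 1 - a * u := denom_pos ha θ
  have h2 : 0 < 1 - b * u := denom_pos hb θ
  have h3 : 0 < 1 - a * v := denom_pos ha φ
  have h4 : 0 < 1 - b * v := denom_pos hb φ
  have hW : ellW a θ * ellW b φ < ellW b θ * ellW a φ := by
    have hPQ : (1 - b * u) * (1 - a * v) < (1 - a * u) * (1 - b * v) := by nlinarith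
    have hsq : Real.sqrt ((1 - b * u) * (1 - a * v)) <
        Real.sqrt ((1 - a * u) * (1 - b * v)) :=
      Real.sqrt_lt_sqrt (by positivity) hPQ
    have e1 : ellW b θ * ellW a φ = 1 / Real.sqrt ((1 - b * u) * (1 - a * v)) := by
      unfold ellW
      rw [Real.sqrt_mul h2.le]
      rw [div_mul_div_comm, one_mul]
    have e2 : ellW a θ * ellW b φ = 1 / Real.sqrt ((1 - a * u) * (1 - b * v)) := by
      unfold ellW
      rw [Real.sqrt_mul h1.le]
      rw [div_mul_div_comm, one_mul]
    rw [e1, e2]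
    apply one_div_lt_one_div_of_lt
    · exact Real.sqrt_pos.2 (by positivity)
    · exact hsq
  have h5 : 0 < u - v := by linarith
  nlinarith

lemma key_nonneg {a b : ℝ} (ha : a ∈ Set.Ioo (0:ℝ) 1) (hb : b ∈ Set.Ioo (0:ℝ) 1)
    (hab : a < b) (θ φ : ℝ) :
    0 ≤ (Real.sin θ ^ 2 - Real.sin φ ^ 2) *
      (ellW b θ * ellW a φ - ellW a θ * ellW b φ) := by
  rcases lt_trichotomy (Real.sin φ ^ 2) (Real.sin θ ^ 2) with h | h | h
  · exact (key_strict ha hb hab h).le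
  · have hw : ∀ m : ℝ, ellW m θ = ellW m φ := by
      intro m; unfold ellW; rw [h]
    rw [hw a, hw b]
    nlinarith
  · have := key_strict ha hb hab (θ := φ) (φ := θ) h
    nlinarith

/-- Inner integral formula: for each `θ`, the integral over `φ` of the key
expression equals an explicit linear combination. -/
lemma inner_integral {a b : ℝ} (ha : a ∈ Set.Ioo (0:ℝ) 1) (hb : b ∈ Set.Ioo (0:ℝ) 1)
    (θ : ℝ) :
    (∫ φ in (0:ℝ)..(π / 2), (Real.sin θ ^ 2 - Real.sin φ ^ 2) *
        (ellW b θ * ellW a φ - ellW a θ * ellW b φ)) =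
      Real.sin θ ^ 2 * ellW b θ * ellK a - Real.sin θ ^ 2 * ellW a θ * ellK b
        - ellW b θ * ellJ a + ellW a θ * ellJ b := by
  have hKa : ellK a = ∫ φ in (0:ℝ)..(π / 2), ellW a φ := rfl
  have hKb : ellK b = ∫ φ in (0:ℝ)..(π / 2), ellW b φ := rfl
  have hca : Continuous (ellW a) := continuous_ellW ha
  have hcb : Continuous (ellW b) := continuous_ellW hb
  have e : (fun φ => (Real.sin θ ^ 2 - Real.sin φ ^ 2) *
      (ellW b θ * ellW a φ - ellW a θ * ellW b φ)) =
      fun φ => ((Real.sin θ ^ 2 * ellW b θ) * ellW a φ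
        - (Real.sin θ ^ 2 * ellW a θ) * ellW b φ)
        - (ellW b θ * (Real.sin φ ^ 2 * ellW a φ)
          - ellW a θ * (Real.sin φ ^ 2 * ellW b φ)) := by
    funext φ; ring
  rw [e]
  have i1 : IntervalIntegrable (fun φ => (Real.sin θ ^ 2 * ellW b θ) * ellW a φ)
      volume 0 (π / 2) := (continuous_const.mul hca).intervalIntegrable _ _
  have i2 : IntervalIntegrable (fun φ => (Real.sin θ ^ 2 * ellW a θ) * ellW b φ)
      volume 0 (π / 2) := (continuous_const.mul hcb).intervalIntegrable _ _
  have i3 : IntervalIntegrable (fun φ => ellW b θ * (Real.sin φ ^ 2 * ellW a φ))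
      volume 0 (π / 2) :=
    (continuous_const.mul ((continuous_sin.pow 2).mul hca)).intervalIntegrable _ _
  have i4 : IntervalIntegrable (fun φ => ellW a θ * (Real.sin φ ^ 2 * ellW b φ))
      volume 0 (π / 2) :=
    (continuous_const.mul ((continuous_sin.pow 2).mul hcb)).intervalIntegrable _ _
  rw [intervalIntegral.integral_sub (i1.sub i2) (i3.sub i4),
    intervalIntegral.integral_sub i1 i2, intervalIntegral.integral_sub i3 i4,
    intervalIntegral.integral_const_mul, intervalIntegral.integral_const_mul,
    intervalIntegral.integral_const_mul, intervalIntegral.integral_const_mul]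
  rw [hKa, hKb]
  unfold ellJ
  ring

/-- The main strict inequality: `J a * K b < J b * K a` for `a < b`. -/
lemma main_ineq {a b : ℝ} (ha : a ∈ Set.Ioo (0:ℝ) 1) (hb : b ∈ Set.Ioo (0:ℝ) 1)
    (hab : a < b) : ellJ a * ellK b < ellJ b * ellK a := by
  set g : ℝ → ℝ := fun θ =>
    Real.sin θ ^ 2 * ellW b θ * ellK a - Real.sin θ ^ 2 * ellW a θ * ellK b
      - ellW b θ * ellJ a + ellW a θ * ellJ b with hg
  have hca : Continuous (ellW a) := continuous_ellW ha
  have hcb : Continuous (ellW b) := continuous_ellW hb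
  have hgc : Continuous g := by
    apply Continuous.add
    apply Continuous.sub
    apply Continuous.sub
    · exact ((continuous_sin.pow 2).mul hcb).mul continuous_const
    · exact ((continuous_sin.pow 2).mul hca).mul continuous_const
    · exact hcb.mul continuous_const
    · exact hca.mul continuous_const
  -- g θ ≥ 0 always, and g θ > 0 for θ ∈ Ioo (0, π/2)
  have hFc : ∀ θ : ℝ, Continuous (fun φ => (Real.sin θ ^ 2 - Real.sin φ ^ 2) *
      (ellW b θ * ellW a φ - ellW a θ * ellW b φ)) := by
    intro θ
    apply Continuous.mul
    · exact continuous_const.sub (continuous_sin.pow 2)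
    · exact (continuous_const.mul hca).sub (continuous_const.mul hcb)
  have hg_nonneg : ∀ θ : ℝ, 0 ≤ g θ := by
    intro θ
    simp only [hg]
    rw [← inner_integral ha hb θ]
    apply intervalIntegral.integral_nonneg (by positivity)
    intro φ _
    exact key_nonneg ha hb hab θ φ
  have hg_pos : ∀ θ ∈ Set.Ioo (0:ℝ) (π / 2), 0 < g θ := by
    intro θ hθ
    rw [hg]
    simp only
    rw [← inner_integral ha hb θ]
    apply intervalIntegral.integral_pos (by positivity)
    · exact (hFc θ).continuousOn
    · intro φ _
      exact key_nonneg ha hb hab θ φ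
    · refine ⟨0, ⟨le_refl 0, by positivity⟩, ?_⟩
      apply key_strict ha hb hab
      rw [Real.sin_zero]
      have h1 : 0 < Real.sin θ := Real.sin_pos_of_pos_of_lt_pi hθ.1
        (lt_trans hθ.2 (by linarith [Real.pi_pos]))
      nlinarith [h1]
  have hI : 0 < ∫ θ in (0:ℝ)..(π / 2), g θ :=
    intervalIntegral_pos_of_pos_on (hgc.intervalIntegrable _ _) hg_pos (by positivity)
  have hI_eq : (∫ θ in (0:ℝ)..(π / 2), g θ) =
      2 * (ellJ b * ellK a - ellJ a * ellK b) := by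
    have hKa : ellK a = ∫ θ in (0:ℝ)..(π / 2), ellW a θ := rfl
    have hKb : ellK b = ∫ θ in (0:ℝ)..(π / 2), ellW b θ := rfl
    have i1 : IntervalIntegrable (fun θ => Real.sin θ ^ 2 * ellW b θ * ellK a)
        volume 0 (π / 2) :=
      (((continuous_sin.pow 2).mul hcb).mul continuous_const).intervalIntegrable _ _
    have i2 : IntervalIntegrable (fun θ => Real.sin θ ^ 2 * ellW a θ * ellK b)
        volume 0 (π / 2) :=
      (((continuous_sin.pow 2).mul hca).mul continuous_const).intervalIntegrable _ _
    have i3 : IntervalIntegrable (fun θ => ellW b θ * ellJ a) volume 0 (π / 2) :=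
      (hcb.mul continuous_const).intervalIntegrable _ _
    have i4 : IntervalIntegrable (fun θ => ellW a θ * ellJ b) volume 0 (π / 2) :=
      (hca.mul continuous_const).intervalIntegrable _ _
    rw [hg]
    rw [intervalIntegral.integral_add ((i1.sub i2).sub i3) i4,
      intervalIntegral.integral_sub (i1.sub i2) i3,
      intervalIntegral.integral_sub i1 i2,
      intervalIntegral.integral_mul_const, intervalIntegral.integral_mul_const,
      intervalIntegral.integral_mul_const, intervalIntegral.integral_mul_const]
    rw [hKa, hKb]
    unfold ellJ
    ring
  rw [hI_eq] at hI
  linarith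

theorem f_strictAnti :
    StrictAntiOn (fun m => 2 * ellE m / (m * ellK m) + 1 - 2 / m)
      (Set.Ioo (0:ℝ) 1) := by
  intro a ha b hb hab
  have hKa := ellK_pos ha
  have hKb := ellK_pos hb
  have ha0 : a ≠ 0 := ne_of_gt ha.1
  have hb0 : b ≠ 0 := ne_of_gt hb.1
  have hKa0 : ellK a ≠ 0 := ne_of_gt hKa
  have hKb0 : ellK b ≠ 0 := ne_of_gt hKb
  have hfa : 2 * ellE a / (a * ellK a) + 1 - 2 / a = 1 - 2 * (ellJ a / ellK a) := by
    rw [ellE_eq ha]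
    field_simp
    ring
  have hfb : 2 * ellE b / (b * ellK b) + 1 - 2 / b = 1 - 2 * (ellJ b / ellK b) := by
    rw [ellE_eq hb]
    field_simp
    ring
  simp only [hfa, hfb]
  have h : ellJ a / ellK a < ellJ b / ellK b := by
    rw [div_lt_div_iff₀ hKa hKb]
    exact main_ineq ha hb hab
  linarith
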